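/- For all α > 0, r ∈ (0,1), and positive integers n satisfying 1/(α r n^r) + α r/n^{1-r} ≤ 1/14, and for every integer k ≥ 1, the tail sum satisfies ∑_{v=(2k+1)n−k}^∞ e^{-α v^r} < (14/13) · (e^{-α((2k+1)n−k)^r}/(α r)) · ((2k+1)n−k)^{1-r}. -/

import Mathlib

set_option maxHeartbeats 1000000 in
set_option linter.unreachableTactic false in
set_option linter.unusedTactic false in
set_option linter.unnecessarySeqFocus false in

theorem tail_sum_bound (α r : ℝ) (hα : 0 < α) (hr0 : 0 < r) (hr1 : r < 1)
    (n : ℕ) (hn : 1 ≤ n)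
    (hcond : 1 / (α * r * (n : ℝ) ^ r) + α * r / (n : ℝ) ^ (1 - r) ≤ 1 / 14)
    (k : ℕ) (hk : 1 ≤ k) :
    ∑' v : ℕ, Real.exp (-α * ((((2 * k + 1) * n - k + v : ℕ) : ℝ)) ^ r)
      < 14 / 13 * (Real.exp (-α * ((((2 * k + 1) * n - k : ℕ) : ℝ)) ^ r) / (α * r)) *
        ((((2 * k + 1) * n - k : ℕ) : ℝ)) ^ (1 - r) := by
  have hαr : 0 < α * r := mul_pos hα hr0
  set m : ℕ := (2 * k + 1) * n - k with hm
  have hnm : n ≤ m := by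
    have h1 : k + n ≤ (2 * k + 1) * n := by nlinarith
    omega
  set M : ℝ := (m : ℝ) with hM
  have hM1 : (1:ℝ) ≤ M := by
    have h : 1 ≤ m := le_trans hn hnm
    rw [hM]
    exact_mod_cast h
  have hMpos : (0:ℝ) < M := lt_of_lt_of_le one_pos hM1
  have hMn : (n:ℝ) ≤ M := by rw [hM]; exact_mod_cast hnm
  have hMr : (0:ℝ) < M ^ r := Real.rpow_pos_of_pos hMpos r
  have hM1r : (0:ℝ) < M ^ (1-r) := Real.rpow_pos_of_pos hMpos (1-r)
  set a : ℝ := 1 / (α * r * M ^ r) with ha_def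
  set b : ℝ := α * r / M ^ (1 - r) with hb_def
  have ha_pos : 0 < a := by positivity
  have hb_pos : 0 < b := by positivity
  have hab : a + b ≤ 1 / 14 := by
    refine le_trans ?_ hcond
    have hnpos : (0:ℝ) < (n:ℝ) := by exact_mod_cast hn
    rw [ha_def, hb_def]
    gcongr <;> first
      | positivity
      | linarith
      | exact hMn
  have h14 : a < 1 / 14 := by linarith
  have h1a : 0 < 1 - a := by linarith
  set F : ℝ → ℝ := fun x => Real.exp (-α * x ^ r) * x ^ (1 - r) / (α * r) with hF
  set D : ℝ → ℝ := fun y => (Real.exp (-α * y ^ r) * (-α * (r * y ^ (r - 1))) * y ^ (1 - r)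
      + Real.exp (-α * y ^ r) * ((1 - r) * y ^ (1 - r - 1))) / (α * r) with hD
  have hFnn : ∀ x : ℝ, 0 ≤ x → 0 ≤ F x := by
    intro x hx
    simp only [hF]
    positivity
  have hFderiv : ∀ y : ℝ, 0 < y → HasDerivAt F (D y) y := by
    intro y hy
    simp only [hF, hD]
    have h1 : HasDerivAt (fun z : ℝ => z ^ r) (r * y ^ (r - 1)) y :=
      Real.hasDerivAt_rpow_const (Or.inl hy.ne')
    have h2 : HasDerivAt (fun z : ℝ => -α * z ^ r) (-α * (r * y ^ (r - 1))) y := h1.const_mul (-α)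
    have h3 : HasDerivAt (fun z : ℝ => Real.exp (-α * z ^ r))
        (Real.exp (-α * y ^ r) * (-α * (r * y ^ (r - 1)))) y := h2.exp
    have h4 : HasDerivAt (fun z : ℝ => z ^ (1 - r)) ((1 - r) * y ^ (1 - r - 1)) y :=
      Real.hasDerivAt_rpow_const (Or.inl hy.ne')
    exact (h3.mul h4).div_const (α * r)
  -- key one-step estimate
  have hstep : ∀ x : ℝ, M ≤ x → (1 - a) * Real.exp (-α * (x + 1) ^ r) ≤ F x - F (x + 1) := by
    intro x hx
    have hx0 : 0 < x := lt_of_lt_of_le hMpos hx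
    obtain ⟨ξ, hξmem, hξeq⟩ := exists_hasDerivAt_eq_slope F D (by linarith : x < x + 1)
      (fun y hy => (hFderiv y (lt_of_lt_of_le hx0 hy.1)).continuousAt.continuousWithinAt)
      (fun y hy => hFderiv y (lt_of_lt_of_le hx0 hy.1.le))
    have hξ1 : x < ξ := hξmem.1
    have hξ2 : ξ < x + 1 := hξmem.2
    have hξpos : 0 < ξ := lt_trans hx0 hξ1
    have hFdiff : F x - F (x + 1) = -D ξ := by
      have h5 : x + 1 - x = 1 := by ring
      rw [h5, div_one] at hξeq
      linarith [hξeq]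
    set E1 : ℝ := Real.exp (-α * ξ ^ r) with hE1
    have hpow1 : ξ ^ (r - 1) * ξ ^ (1 - r) = 1 := by
      rw [← Real.rpow_add hξpos]
      norm_num
    have hpow2 : ξ ^ (1 - r - 1) = ξ ^ (-r) := by
      congr 1
      ring
    have hDval : -D ξ = E1 * (1 - (1 - r) * ξ ^ (-r) / (α * r)) := by
      simp only [hD]
      rw [hpow2]
      have : E1 * (-α * (r * ξ ^ (r - 1))) * ξ ^ (1 - r)
          = -(E1 * (α * r) * (ξ ^ (r - 1) * ξ ^ (1 - r))) := by ring
      rw [hE1] at this ⊢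
      rw [this, hpow1]
      field_simp
      ring
    have hξr : ξ ^ (-r) ≤ M ^ (-r) := by
      rw [Real.rpow_neg hξpos.le, Real.rpow_neg hMpos.le]
      have : M ^ r ≤ ξ ^ r := Real.rpow_le_rpow hMpos.le (by linarith) hr0.le
      exact inv_anti₀ hMr this
    have hcoef : 1 - a ≤ 1 - (1 - r) * ξ ^ (-r) / (α * r) := by
      have h6 : (1 - r) * ξ ^ (-r) / (α * r) ≤ a := by
        have h8 : M ^ (-r) = (M ^ r)⁻¹ := Real.rpow_neg hMpos.le r
        have h7 : (1 - r) * ξ ^ (-r) ≤ (M ^ r)⁻¹ := by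
          calc (1 - r) * ξ ^ (-r) ≤ 1 * M ^ (-r) :=
                mul_le_mul (by linarith) hξr (by positivity) (by norm_num)
            _ = (M ^ r)⁻¹ := by rw [one_mul, h8]
        rw [ha_def, div_le_div_iff₀ hαr (by positivity : (0:ℝ) < α * r * M ^ r)]
        calc (1 - r) * ξ ^ (-r) * (α * r * M ^ r) ≤ (M ^ r)⁻¹ * (α * r * M ^ r) :=
              mul_le_mul_of_nonneg_right h7 (by positivity)
          _ = 1 * (α * r) := by field_simp
        
      linarith
    have hE : Real.exp (-α * (x + 1) ^ r) ≤ E1 := by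
      rw [hE1]
      apply Real.exp_le_exp.mpr
      have : ξ ^ r ≤ (x + 1) ^ r := Real.rpow_le_rpow hξpos.le hξ2.le hr0.le
      nlinarith
    rw [hFdiff, hDval, mul_comm E1]
    exact mul_le_mul hcoef hE (Real.exp_nonneg _) (by linarith)
  -- telescoping partial sums for the shifted series
  have hpartial : ∀ N : ℕ, ∑ j ∈ Finset.range N, Real.exp (-α * (M + 1 + j) ^ r)
      ≤ F M / (1 - a) := by
    intro N
    have htel : ∑ j ∈ Finset.range N, (F (M + j) - F (M + (j + 1))) = F M - F (M + N) := by
      have h := Finset.sum_range_sub' (fun j : ℕ => F (M + j)) N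
      simp only [Nat.cast_zero, add_zero] at h
      push_cast at h
      convert h using 1
    have hterm : ∀ j ∈ Finset.range N,
        (1 - a) * Real.exp (-α * (M + 1 + j) ^ r) ≤ F (M + j) - F (M + (j + 1)) := by
      intro j _
      have hj : M ≤ M + (j:ℝ) := le_add_of_nonneg_right (Nat.cast_nonneg j)
      have h := hstep (M + j) hj
      have e2 : M + ((j:ℝ) + 1) = M + (j:ℝ) + 1 := by ring
      have e1 : M + 1 + (j:ℝ) = M + (j:ℝ) + 1 := by ring
      rw [e2, e1]
      exact h
    have hsum := Finset.sum_le_sum hterm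
    rw [← Finset.mul_sum, htel] at hsum
    have hFN : 0 ≤ F (M + N) := hFnn _ (by positivity)
    rw [le_div_iff₀ h1a, mul_comm]
    linarith
  -- bound on all partial sums of the full series
  have hgfull : ∀ N : ℕ, ∑ v ∈ Finset.range N, Real.exp (-α * (((m + v : ℕ) : ℝ)) ^ r)
      ≤ Real.exp (-α * M ^ r) + F M / (1 - a) := by
    intro N
    have hC0 : 0 ≤ Real.exp (-α * M ^ r) + F M / (1 - a) :=
      add_nonneg (Real.exp_nonneg _) (div_nonneg (hFnn M (by positivity)) h1a.le)
    cases N with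
    | zero => simpa using hC0
    | succ N =>
      rw [Finset.sum_range_succ']
      have h0 : Real.exp (-α * (((m + 0 : ℕ) : ℝ)) ^ r) = Real.exp (-α * M ^ r) := by
        norm_num [hM]
      have h1 : ∑ i ∈ Finset.range N, Real.exp (-α * (((m + (i + 1) : ℕ) : ℝ)) ^ r)
          ≤ F M / (1 - a) := by
        calc ∑ i ∈ Finset.range N, Real.exp (-α * (((m + (i + 1) : ℕ) : ℝ)) ^ r)
            = ∑ i ∈ Finset.range N, Real.exp (-α * (M + 1 + i) ^ r) := by
              apply Finset.sum_congr rfl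
              intro i _
              congr 2
              push_cast
              rw [hM]; ring
          _ ≤ F M / (1 - a) := hpartial N
      rw [h0]
      linarith
  -- the tsum bound
  have htsum : ∑' v : ℕ, Real.exp (-α * (((m + v : ℕ) : ℝ)) ^ r)
      ≤ Real.exp (-α * M ^ r) + F M / (1 - a) :=
    Real.tsum_le_of_sum_range_le (fun v => Real.exp_nonneg _) hgfull
  -- identities
  have hFMpos : 0 < F M := by
    simp only [hF]
    positivity
  have hb_eq : Real.exp (-α * M ^ r) = b * F M := by
    simp only [hF, hb_def]
    field_simp
  have hq : b + 1 / (1 - a) < 14 / 13 := by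
    have hinv : 1 / (1 - a) ≤ 1 + (14 / 13) * a := by
      rw [div_le_iff₀ h1a]
      nlinarith [mul_le_mul_of_nonneg_left h14.le ha_pos.le]
    linarith
  calc ∑' v : ℕ, Real.exp (-α * (((m + v : ℕ) : ℝ)) ^ r)
      ≤ Real.exp (-α * M ^ r) + F M / (1 - a) := htsum
    _ = (b + 1 / (1 - a)) * F M := by rw [hb_eq]; ring
    _ < 14 / 13 * F M := mul_lt_mul_of_pos_right hq hFMpos
    _ = 14 / 13 * (Real.exp (-α * M ^ r) / (α * r)) * M ^ (1 - r) := by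
        simp only [hF]; ring
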